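/- Let F be a finite family of sets that is hitting-t-degenerate, and suppose that every subfamily F' ⊆ F with packing number ν(F') = 1 satisfies τ(F') ≤ t₀. Then τ(F) ≤ t₀ + t·(ν(F) − 1). -/

import Mathlib

open Classical MeasureTheory
noncomputable section

/-- Points of the Euclidean plane. -/
abbrev Pt := EuclideanSpace ℝ (Fin 2)

/-- A finite point set `H` hits every member of the family `F`. -/
def Hits (H : Finset Pt) (F : Finset (Set Pt)) : Prop := ∀ S ∈ F, ∃ p ∈ H, p ∈ S

/-- The hitting number τ of a family. -/
def hitNum (F : Finset (Set Pt)) : ℕ := sInf {n | ∃ H : Finset Pt, H.card = n ∧ Hits H F}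

/-- The packing number ν of a family. -/
def packNum (F : Finset (Set Pt)) : ℕ :=
  sSup {n | ∃ P ⊆ F, P.card = n ∧ (P : Set (Set Pt)).Pairwise Disjoint}

/-- The maximum degree Δ of a family: the maximum number of members containing a common point. -/
def maxDeg (F : Finset (Set Pt)) : ℕ :=
  sSup {n | ∃ p : Pt, (F.filter fun S => p ∈ S).card = n}

/-- The chromatic number χ of the intersection graph of a family. -/
def chromNum (F : Finset (Set Pt)) : ℕ :=
  sInf {n | ∃ col : Set Pt → ℕ, (∀ S ∈ F, col S < n) ∧
    ∀ S ∈ F, ∀ T ∈ F, S ≠ T → (S ∩ T).Nonempty → col S ≠ col T}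

/-- Hitting-`t`-degeneracy: every nonempty subfamily has a member whose closed
neighbourhood within the subfamily can be hit by at most `t` points. -/
def HitDeg (t : ℕ) (F : Finset (Set Pt)) : Prop :=
  ∀ F' ⊆ F, F'.Nonempty → ∃ S ∈ F',
    hitNum (F'.filter fun T => (T ∩ S).Nonempty) ≤ t

/-- `D`-degeneracy of a family: every nonempty subfamily has a member intersecting
at most `D` other members of the subfamily. -/
def FamDeg (D : ℕ) (F : Finset (Set Pt)) : Prop :=
  ∀ F' ⊆ F, F'.Nonempty → ∃ S ∈ F',
    (F'.filter fun T => T ≠ S ∧ (T ∩ S).Nonempty).card ≤ D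

lemma hitNum_le_of_hits {H : Finset Pt} {F : Finset (Set Pt)} (hH : Hits H F) :
    hitNum F ≤ H.card := Nat.sInf_le ⟨H, rfl, hH⟩

lemma exists_hits_of_nonempty {F : Finset (Set Pt)} (hne : ∀ S ∈ F, (S : Set Pt).Nonempty) :
    ∃ H : Finset Pt, H.card = hitNum F ∧ Hits H F := by
  have hset : {n | ∃ H : Finset Pt, H.card = n ∧ Hits H F}.Nonempty := by
    classical
    refine ⟨_, F.image (fun S => if h : (S : Set Pt).Nonempty then h.some else 0), rfl, ?_⟩
    intro S hS
    refine ⟨_, Finset.mem_image_of_mem _ hS, ?_⟩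
    rw [dif_pos (hne S hS)]
    exact (hne S hS).some_mem
  exact Nat.sInf_mem hset

lemma packNum_bdd (F : Finset (Set Pt)) :
    BddAbove {n | ∃ P ⊆ F, P.card = n ∧ (P : Set (Set Pt)).Pairwise Disjoint} :=
  ⟨F.card, fun n ⟨P, hP, hc, _⟩ => hc ▸ Finset.card_le_card hP⟩

lemma mem_le_packNum {F P : Finset (Set Pt)} (hP : P ⊆ F)
    (hd : (P : Set (Set Pt)).Pairwise Disjoint) : P.card ≤ packNum F :=
  le_csSup (packNum_bdd F) ⟨P, hP, rfl, hd⟩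

lemma packNum_attained (F : Finset (Set Pt)) :
    ∃ P ⊆ F, P.card = packNum F ∧ (P : Set (Set Pt)).Pairwise Disjoint := by
  have := Nat.sSup_mem (s := {n | ∃ P ⊆ F, P.card = n ∧ (P : Set (Set Pt)).Pairwise Disjoint})
    ⟨0, ∅, by simp⟩ (packNum_bdd F)
  exact this

lemma one_le_packNum {F : Finset (Set Pt)} (hF : F.Nonempty) : 1 ≤ packNum F := by
  obtain ⟨S, hS⟩ := hF
  have := mem_le_packNum (P := {S}) (by simpa using hS) (by simp)
  simpa using this

lemma main_aux (t t₀ : ℕ) : ∀ F : Finset (Set Pt), HitDeg t F →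
    (∀ F' ⊆ F, packNum F' = 1 → hitNum F' ≤ t₀) →
    hitNum F ≤ t₀ + t * (packNum F - 1) := by
  intro F
  induction F using Finset.strongInduction with
  | _ F IH =>
    intro h h0
    rcases F.eq_empty_or_nonempty with rfl | hFne
    · have : hitNum (∅ : Finset (Set Pt)) ≤ 0 :=
        Nat.sInf_le ⟨∅, rfl, fun S hS => by simp at hS⟩
      omega
    by_cases hemp : ∃ S ∈ F, S = (∅ : Set Pt)
    · -- an empty member: no hitting set exists, hitNum = 0
      obtain ⟨S, hS, rfl⟩ := hemp
      have : hitNum F = 0 := by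
        rw [hitNum, Nat.sInf_eq_zero]
        right
        ext n
        simp only [Set.mem_setOf_eq, Set.mem_empty_iff_false, iff_false]
        rintro ⟨H, -, hH⟩
        obtain ⟨p, -, hp⟩ := hH _ hS
        exact hp
      omega
    push_neg at hemp
    have hne : ∀ S ∈ F, (S : Set Pt).Nonempty := hemp
    by_cases hpack1 : packNum F = 1
    · have := h0 F le_rfl hpack1
      omega
    have hpack2 : 2 ≤ packNum F := by
      have := one_le_packNum hFne
      omega
    -- degeneracy: pick S
    obtain ⟨S, hSF, hSnbr⟩ := h F le_rfl hFne
    set N := F.filter (fun T => (T ∩ S).Nonempty) with hN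
    obtain ⟨H1, hH1card, hH1⟩ := exists_hits_of_nonempty (F := N)
      (fun T hT => hne T (Finset.mem_filter.mp hT).1)
    set F2 := F.filter (fun T => ¬ (T ∩ S).Nonempty) with hF2
    have hSnotF2 : S ∉ F2 := by
      simp only [hF2, Finset.mem_filter, not_and, not_not]
      intro _
      simpa using hne S hSF
    have hF2ss : F2 ⊂ F := ⟨Finset.filter_subset _ _, fun hsub => hSnotF2 (hsub hSF)⟩
    -- packing bound
    obtain ⟨P, hPF2, hPcard, hPdisj⟩ := packNum_attained F2
    have hSnotP : S ∉ P := fun hx => hSnotF2 (hPF2 hx)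
    have hins : (insert S P : Finset (Set Pt)) ⊆ F :=
      Finset.insert_subset hSF (hPF2.trans (Finset.filter_subset _ _))
    have hinsdisj : ((insert S P : Finset (Set Pt)) : Set (Set Pt)).Pairwise Disjoint := by
      rw [Finset.coe_insert]
      refine (Set.pairwise_insert_of_symmetric (r := Disjoint)).mpr ⟨hPdisj, ?_⟩
      intro T hT _
      have hTF2 : T ∈ F2 := hPF2 hT
      have : ¬ (T ∩ S).Nonempty := (Finset.mem_filter.mp hTF2).2
      rw [Set.not_nonempty_iff_eq_empty] at this
      exact (Set.disjoint_iff_inter_eq_empty.mpr this).symm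
    have hnu : packNum F2 + 1 ≤ packNum F := by
      have := mem_le_packNum hins hinsdisj
      rwa [Finset.card_insert_of_notMem hSnotP, hPcard] at this
    -- induction on F2
    have hIH : hitNum F2 ≤ t₀ + t * (packNum F2 - 1) :=
      IH F2 hF2ss (fun G hG => h G (hG.trans hF2ss.subset))
        (fun G hG => h0 G (hG.trans hF2ss.subset))
    obtain ⟨H2, hH2card, hH2⟩ := exists_hits_of_nonempty (F := F2)
      (fun T hT => hne T (Finset.mem_filter.mp hT).1)
    -- combine
    have hhits : Hits (H1 ∪ H2) F := by
      intro T hT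
      by_cases hTS : (T ∩ S).Nonempty
      · obtain ⟨p, hp, hpT⟩ := hH1 T (Finset.mem_filter.mpr ⟨hT, hTS⟩)
        exact ⟨p, Finset.mem_union_left _ hp, hpT⟩
      · obtain ⟨p, hp, hpT⟩ := hH2 T (Finset.mem_filter.mpr ⟨hT, hTS⟩)
        exact ⟨p, Finset.mem_union_right _ hp, hpT⟩
    have hchain : hitNum F ≤ H1.card + H2.card :=
      (hitNum_le_of_hits hhits).trans (Finset.card_union_le _ _)
    have hH1t : H1.card ≤ t := hH1card ▸ hSnbr
    have hfinal : H1.card + H2.card ≤ t + (t₀ + t * (packNum F2 - 1)) := by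
      have := hH2card ▸ hIH
      omega
    have harith : t + (t₀ + t * (packNum F2 - 1)) ≤ t₀ + t * (packNum F - 1) := by
      rcases Nat.eq_zero_or_pos (packNum F2) with h2 | h2
      · rw [h2]
        have : t * 1 ≤ t * (packNum F - 1) := Nat.mul_le_mul_left t (by omega)
        omega
      · have hle : packNum F2 ≤ packNum F - 1 := by omega
        have : t * packNum F2 ≤ t * (packNum F - 1) := Nat.mul_le_mul_left t hle
        obtain ⟨k, hk⟩ : ∃ k, packNum F2 = k + 1 := ⟨packNum F2 - 1, by omega⟩
        have heq : t + t * (packNum F2 - 1) = t * packNum F2 := by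
          rw [hk, Nat.add_sub_cancel, Nat.mul_succ]
          ring
        omega
    omega

theorem stmt_1 (t t₀ : ℕ) (F : Finset (Set Pt)) (h : HitDeg t F)
    (h0 : ∀ F' ⊆ F, packNum F' = 1 → hitNum F' ≤ t₀) :
    hitNum F ≤ t₀ + t * (packNum F - 1) := by
  exact main_aux t t₀ F h h0
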